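/- Let G be a finite group that is nilpotent of class exactly 3 (i.e. every triple commutator ⁅⁅x,y⁆,z⁆ lies in the center Z(G), but not every triple commutator is trivial), and suppose 3 does not divide the order of G. Then the loop commutator operation of the associated gyrogroup is not associative: there exist x, y, z ∈ G with °⁅°⁅x,y⁆, z⁆ ≠ °⁅x, °⁅y,z⁆⁆; equivalently, ⁅⁅x,y⁆,z⁆⁹ ≠ ⁅x,⁅y,z⁆⁆⁹ for some x,y,z ∈ G. -/

import Mathlib

/-- The gyrogroup operation associated with a group: `x ∘ y = y⁻¹ * x * y²`. -/
def gyrOp {G : Type*} [Group G] (x y : G) : G := y⁻¹ * x * y ^ 2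

/-- The loop commutator of the associated gyrogroup:
`°⁅x,y⁆ = (y∘x)·(x∘y)·(y∘x)⁻²`. -/
def loopComm {G : Type*} [Group G] (x y : G) : G :=
  gyrOp y x * gyrOp x y * (gyrOp y x ^ 2)⁻¹

open scoped commutatorElement

section Aux

variable {G : Type*} [Group G]

lemma lcKey' (a b d : G) (hd : ∀ g : G, Commute g d)
    (hba : b * a = d⁻¹ * (a * b)) : loopComm a b = d ^ 3 := by
  have mv : ∀ u t : G, u * (d * t) = d * (u * t) := fun u t => by
    rw [← mul_assoc, (hd u).eq, mul_assoc]
  have mvi : ∀ u t : G, u * (d⁻¹ * t) = d⁻¹ * (u * t) := fun u t => by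
    rw [← mul_assoc, ((hd u).inv_right).eq, mul_assoc]
  have bv : ∀ u : G, u * d = d * u := fun u => (hd u).eq
  have bvi : ∀ u : G, u * d⁻¹ = d⁻¹ * u := fun u => ((hd u).inv_right).eq
  have E : a * b = d * (b * a) := by
    rw [hba, ← mul_assoc, mul_inv_cancel, one_mul]
  have hab : a * b * a⁻¹ = d * b := by rw [E]; group
  have r1 : ∀ t : G, b * (a * t) = d⁻¹ * (a * (b * t)) := fun t => by
    rw [← mul_assoc, hba, mul_assoc, mul_assoc]
  have r2b : b * a⁻¹ = d * (a⁻¹ * b) := by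
    apply mul_left_cancel (a := a)
    rw [← mul_assoc, hab, mv]; group
  have r2 : ∀ t : G, b * (a⁻¹ * t) = d * (a⁻¹ * (b * t)) := fun t => by
    rw [← mul_assoc, r2b, mul_assoc, mul_assoc]
  have r3b : b⁻¹ * a = d * (a * b⁻¹) := by
    apply mul_left_cancel (a := b)
    rw [← mul_assoc, mul_inv_cancel, one_mul, mv,
      show d * (b * (a * b⁻¹)) = d * (b * a) * b⁻¹ by group, ← E]
    group
  have r3 : ∀ t : G, b⁻¹ * (a * t) = d * (a * (b⁻¹ * t)) := fun t => by
    rw [← mul_assoc, r3b, mul_assoc, mul_assoc]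
  have r4b : b⁻¹ * a⁻¹ = d⁻¹ * (a⁻¹ * b⁻¹) := by
    apply mul_left_cancel (a := b)
    rw [← mul_assoc, mul_inv_cancel, one_mul, mvi,
      show d⁻¹ * (b * (a⁻¹ * b⁻¹)) = d⁻¹ * ((b * a⁻¹) * b⁻¹) by group, r2b]
    group
  have r4 : ∀ t : G, b⁻¹ * (a⁻¹ * t) = d⁻¹ * (a⁻¹ * (b⁻¹ * t)) := fun t => by
    rw [← mul_assoc, r4b, mul_assoc, mul_assoc]
  rw [show (d:G)^3 = d * d * d by rw [pow_succ, pow_two]]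
  simp only [loopComm, gyrOp, pow_two, mul_inv_rev, inv_inv, mul_assoc,
    r1, r2, r3, r4, hba, r2b, r3b, r4b,
    mv a, mv b, mv a⁻¹, mv b⁻¹, mvi a, mvi b, mvi a⁻¹, mvi b⁻¹,
    bv a, bv b, bv a⁻¹, bv b⁻¹, bvi a, bvi b, bvi a⁻¹, bvi b⁻¹,
    mul_inv_cancel_left, inv_mul_cancel_left, mul_inv_cancel, inv_mul_cancel,
    one_mul, mul_one]

lemma lcKey (a b : G) (hd : ∀ g : G, Commute g ⁅a, b⁆) :
    loopComm a b = ⁅a, b⁆ ^ 3 :=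
  lcKey' a b ⁅a, b⁆ hd (by simp only [commutatorElement_def]; group)

lemma loopComm_central_left (a b w : G) (hw : ∀ g : G, Commute g w) :
    loopComm (w * a) b = loopComm a b := by
  have mv : ∀ u t : G, u * (w * t) = w * (u * t) := fun u t => by
    rw [← mul_assoc, (hw u).eq, mul_assoc]
  have mvi : ∀ u t : G, u * (w⁻¹ * t) = w⁻¹ * (u * t) := fun u t => by
    rw [← mul_assoc, ((hw u).inv_right).eq, mul_assoc]
  have bv : ∀ u : G, u * w = w * u := fun u => (hw u).eq
  have bvi : ∀ u : G, u * w⁻¹ = w⁻¹ * u := fun u => ((hw u).inv_right).eq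
  simp only [loopComm, gyrOp, pow_two, mul_inv_rev, inv_inv, mul_assoc,
    mv a, mv b, mv a⁻¹, mv b⁻¹, mvi a, mvi b, mvi a⁻¹, mvi b⁻¹,
    bv a, bv b, bv a⁻¹, bv b⁻¹, bvi a, bvi b, bvi a⁻¹, bvi b⁻¹,
    mul_inv_cancel_left, inv_mul_cancel_left, mul_inv_cancel, inv_mul_cancel,
    one_mul, mul_one]

lemma loopComm_central_right (a b w : G) (hw : ∀ g : G, Commute g w) :
    loopComm a (w * b) = loopComm a b := by
  have mv : ∀ u t : G, u * (w * t) = w * (u * t) := fun u t => by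
    rw [← mul_assoc, (hw u).eq, mul_assoc]
  have mvi : ∀ u t : G, u * (w⁻¹ * t) = w⁻¹ * (u * t) := fun u t => by
    rw [← mul_assoc, ((hw u).inv_right).eq, mul_assoc]
  have bv : ∀ u : G, u * w = w * u := fun u => (hw u).eq
  have bvi : ∀ u : G, u * w⁻¹ = w⁻¹ * u := fun u => ((hw u).inv_right).eq
  simp only [loopComm, gyrOp, pow_two, mul_inv_rev, inv_inv, mul_assoc,
    mv a, mv b, mv a⁻¹, mv b⁻¹, mvi a, mvi b, mvi a⁻¹, mvi b⁻¹,
    bv a, bv b, bv a⁻¹, bv b⁻¹, bvi a, bvi b, bvi a⁻¹, bvi b⁻¹,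
    mul_inv_cancel_left, inv_mul_cancel_left, mul_inv_cancel, inv_mul_cancel,
    one_mul, mul_one]

lemma comm_inv_right (c z : G) (hd : ∀ g : G, Commute g ⁅c, z⁆) :
    ⁅c, z⁻¹⁆ = ⁅c, z⁆⁻¹ := by
  have h1 : ⁅c, z⁻¹⁆ = z⁻¹ * ⁅c, z⁆⁻¹ * z := by
    simp only [commutatorElement_def]; group
  rw [h1, ((hd z⁻¹).inv_right).eq, inv_mul_cancel_right]

lemma comm_mul_right (c z w : G) (h2 : ∀ g : G, Commute g ⁅c, w⁆) :
    ⁅c, z * w⁆ = ⁅c, z⁆ * ⁅c, w⁆ := by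
  have h1 : ⁅c, z * w⁆ = ⁅c, z⁆ * (z * ⁅c, w⁆ * z⁻¹) := by
    simp only [commutatorElement_def]; group
  rw [h1, (h2 z).eq, mul_inv_cancel_right]

lemma conj_comm_left (c u z : G) (hcen : ∀ w g : G, Commute g ⁅c, w⁆) :
    ⁅u * c * u⁻¹, z⁆ = ⁅c, z⁆ := by
  have h1 : ⁅u * c * u⁻¹, z⁆ = u * ⁅c, u⁻¹ * (z * u)⁆ * u⁻¹ := by
    simp only [commutatorElement_def]; group
  have h2 : ⁅c, u⁻¹ * (z * u)⁆ = ⁅c, u⁻¹⁆ * (⁅c, z⁆ * ⁅c, u⁆) := by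
    rw [comm_mul_right c u⁻¹ (z * u) (hcen (z*u)),
      comm_mul_right c z u (hcen u)]
  rw [h1, h2, comm_inv_right c u (hcen u), (hcen u ⁅c,z⁆).eq,
    inv_mul_cancel_left, (hcen z u).eq, mul_inv_cancel_right]

lemma comm_pow_left (c z : G) (hd : ∀ g : G, Commute g ⁅c, z⁆) (n : ℕ) :
    ⁅c ^ n, z⁆ = ⁅c, z⁆ ^ n := by
  have hmul : ∀ u v : G, ⁅u * v, z⁆ = u * ⁅v, z⁆ * u⁻¹ * ⁅u, z⁆ := by
    intro u v; simp only [commutatorElement_def]; group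
  induction n with
  | zero => simp [commutatorElement_def]
  | succ n ih =>
    rw [pow_succ', hmul, ih, ((hd c).pow_right n).eq, mul_inv_cancel_right,
      pow_succ]

lemma comm_pow_right (x c : G) (hd : ∀ g : G, Commute g ⁅x, c⁆) (n : ℕ) :
    ⁅x, c ^ n⁆ = ⁅x, c⁆ ^ n := by
  have hmul : ∀ u v : G, ⁅x, u * v⁆ = ⁅x, u⁆ * (u * ⁅x, v⁆ * u⁻¹) := by
    intro u v; simp only [commutatorElement_def]; group
  induction n with
  | zero => simp [commutatorElement_def]
  | succ n ih =>
    rw [pow_succ', hmul, ih, ((hd c).pow_right n).eq, mul_inv_cancel_right,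
      pow_succ]
    exact ((Commute.refl ⁅x, c⁆).pow_right n).eq

lemma jacobi (h3 : ∀ x y z : G, ⁅⁅x, y⁆, z⁆ ∈ Subgroup.center G) (x y z : G) :
    ⁅⁅x, y⁆, z⁆⁻¹ * ⁅⁅y, z⁆, x⁆⁻¹ * ⁅⁅z, x⁆, y⁆⁻¹ = 1 := by
  have hcen : ∀ a b w g : G, Commute g ⁅⁅a, b⁆, w⁆ := fun a b w g =>
    Subgroup.mem_center_iff.mp (h3 a b w) g
  have hw : (y⁻¹ * ⁅⁅y,x⁻¹⁆,z⁻¹⁆ * y) * (z⁻¹ * ⁅⁅z,y⁻¹⁆,x⁻¹⁆ * z) *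
      (x⁻¹ * ⁅⁅x,z⁻¹⁆,y⁻¹⁆ * x) = 1 := by
    simp only [commutatorElement_def]; group
  have t1 : ⁅⁅y, x⁻¹⁆, z⁻¹⁆ = ⁅⁅x, y⁆, z⁆⁻¹ := by
    rw [show ⁅y, x⁻¹⁆ = x⁻¹ * ⁅x, y⁆ * x⁻¹⁻¹ by simp only [commutatorElement_def]; group,
      conj_comm_left ⁅x,y⁆ x⁻¹ z⁻¹ (hcen x y), comm_inv_right _ _ (hcen x y z)]
  have t2 : ⁅⁅z, y⁻¹⁆, x⁻¹⁆ = ⁅⁅y, z⁆, x⁆⁻¹ := by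
    rw [show ⁅z, y⁻¹⁆ = y⁻¹ * ⁅y, z⁆ * y⁻¹⁻¹ by simp only [commutatorElement_def]; group,
      conj_comm_left ⁅y,z⁆ y⁻¹ x⁻¹ (hcen y z), comm_inv_right _ _ (hcen y z x)]
  have t3 : ⁅⁅x, z⁻¹⁆, y⁻¹⁆ = ⁅⁅z, x⁆, y⁆⁻¹ := by
    rw [show ⁅x, z⁻¹⁆ = z⁻¹ * ⁅z, x⁆ * z⁻¹⁻¹ by simp only [commutatorElement_def]; group,
      conj_comm_left ⁅z,x⁆ z⁻¹ y⁻¹ (hcen z x), comm_inv_right _ _ (hcen z x y)]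
  rw [t1, t2, t3] at hw
  rw [((hcen x y z y⁻¹).inv_right).eq, inv_mul_cancel_right,
    ((hcen y z x z⁻¹).inv_right).eq, inv_mul_cancel_right,
    ((hcen z x y x⁻¹).inv_right).eq, inv_mul_cancel_right] at hw
  exact hw

lemma levi (h3 : ∀ x y z : G, ⁅⁅x, y⁆, z⁆ ∈ Subgroup.center G)
    (hEq : ∀ x y z : G, ⁅⁅x, y⁆, z⁆ = ⁅x, ⁅y, z⁆⁆) (x y z : G) :
    ⁅⁅x, y⁆, z⁆ = 1 := by
  have j := jacobi h3 x y z
  have e1 : ⁅⁅y, z⁆, x⁆ = ⁅⁅x, y⁆, z⁆⁻¹ := by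
    rw [hEq x y z, ← commutatorElement_inv]
  have e2 : ⁅⁅z, x⁆, y⁆ = ⁅⁅x, y⁆, z⁆⁻¹ := by
    rw [hEq z x y, ← commutatorElement_inv]
  rw [e1, e2, inv_inv] at j
  -- j : ⁅⁅x,y⁆,z⁆⁻¹ * ⁅⁅x,y⁆,z⁆ * ⁅⁅x,y⁆,z⁆ = 1
  rwa [inv_mul_cancel, one_mul] at j

end Aux

section Main

variable {G : Type*} [Group G]

lemma loopComm_map {H : Type*} [Group H] (f : G →* H) (a b : G) :
    f (loopComm a b) = loopComm (f a) (f b) := by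
  simp only [loopComm, gyrOp, map_mul, map_inv, map_pow]

lemma corr_mem_center (h3 : ∀ x y z : G, ⁅⁅x, y⁆, z⁆ ∈ Subgroup.center G)
    (x y : G) : loopComm x y * (⁅x, y⁆ ^ 3)⁻¹ ∈ Subgroup.center G := by
  rw [← QuotientGroup.eq_one_iff]
  have hmk : ((loopComm x y * (⁅x, y⁆ ^ 3)⁻¹ : G) : G ⧸ Subgroup.center G)
      = QuotientGroup.mk' (Subgroup.center G) (loopComm x y * (⁅x, y⁆ ^ 3)⁻¹) := rfl
  rw [hmk, map_mul, map_inv, map_pow, loopComm_map, map_commutatorElement]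
  set π := QuotientGroup.mk' (Subgroup.center G) with hπ
  have hd : ∀ g : G ⧸ Subgroup.center G, Commute g ⁅π x, π y⁆ := by
    intro g
    obtain ⟨w, rfl⟩ := QuotientGroup.mk'_surjective (Subgroup.center G) g
    have h1 : ⁅⁅π x, π y⁆, π w⁆ = 1 := by
      rw [← map_commutatorElement, ← map_commutatorElement]
      exact (QuotientGroup.eq_one_iff _).mpr (h3 x y w)
    exact (commutatorElement_eq_one_iff_commute.mp h1).symm
  rw [lcKey _ _ hd, mul_inv_cancel]

lemma identityL (h3 : ∀ x y z : G, ⁅⁅x, y⁆, z⁆ ∈ Subgroup.center G)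
    (x y z : G) : loopComm (loopComm x y) z = ⁅⁅x, y⁆, z⁆ ^ 9 := by
  have hw := Subgroup.mem_center_iff.mp (corr_mem_center h3 x y)
  rw [show loopComm x y = (loopComm x y * (⁅x, y⁆ ^ 3)⁻¹) * ⁅x, y⁆ ^ 3 by
      rw [inv_mul_cancel_right],
    loopComm_central_left _ _ _ hw]
  have hd0 : ∀ g : G, Commute g ⁅⁅x, y⁆, z⁆ := fun g =>
    Subgroup.mem_center_iff.mp (h3 x y z) g
  have hpow : ⁅⁅x, y⁆ ^ 3, z⁆ = ⁅⁅x, y⁆, z⁆ ^ 3 := comm_pow_left _ _ hd0 3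
  have hd1 : ∀ g : G, Commute g ⁅⁅x, y⁆ ^ 3, z⁆ := fun g => by
    rw [hpow]; exact (hd0 g).pow_right 3
  rw [lcKey _ _ hd1, hpow, ← pow_mul]

lemma identityR (h3 : ∀ x y z : G, ⁅⁅x, y⁆, z⁆ ∈ Subgroup.center G)
    (x y z : G) : loopComm x (loopComm y z) = ⁅x, ⁅y, z⁆⁆ ^ 9 := by
  have hw := Subgroup.mem_center_iff.mp (corr_mem_center h3 y z)
  rw [show loopComm y z = (loopComm y z * (⁅y, z⁆ ^ 3)⁻¹) * ⁅y, z⁆ ^ 3 by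
      rw [inv_mul_cancel_right],
    loopComm_central_right _ _ _ hw]
  have hd0 : ∀ g : G, Commute g ⁅x, ⁅y, z⁆⁆ := fun g => by
    have h := (show Commute g ⁅⁅y, z⁆, x⁆ from
      Subgroup.mem_center_iff.mp (h3 y z x) g).inv_right
    rwa [commutatorElement_inv] at h
  have hpow : ⁅x, ⁅y, z⁆ ^ 3⁆ = ⁅x, ⁅y, z⁆⁆ ^ 3 := comm_pow_right _ _ hd0 3
  have hd1 : ∀ g : G, Commute g ⁅x, ⁅y, z⁆ ^ 3⁆ := fun g => by
    rw [hpow]; exact (hd0 g).pow_right 3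
  rw [lcKey _ _ hd1, hpow, ← pow_mul]

end Main

theorem loopComm_not_assoc_of_class_three {G : Type*} [Group G] [Fintype G]
    (h3 : ∀ x y z : G, ⁅⁅x, y⁆, z⁆ ∈ Subgroup.center G)
    (hcl3 : ∃ x y z : G, ⁅⁅x, y⁆, z⁆ ≠ 1)
    (hcard : ¬ (3 ∣ Fintype.card G)) :
    (∃ x y z : G, loopComm (loopComm x y) z ≠ loopComm x (loopComm y z)) ∧
      (∃ x y z : G, ⁅⁅x, y⁆, z⁆ ^ 9 ≠ ⁅x, ⁅y, z⁆⁆ ^ 9) := by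
  have hcop : Nat.Coprime 9 (Fintype.card G) := by
    have h39 : Nat.Coprime 3 (Fintype.card G) :=
      (Nat.Prime.coprime_iff_not_dvd Nat.prime_three).mpr hcard
    have := Nat.Coprime.pow_left 2 h39
    norm_num at this ⊢
    exact this
  have pow9inj : ∀ u v : G, u ∈ Subgroup.center G → v ∈ Subgroup.center G →
      u ^ 9 = v ^ 9 → u = v := by
    intro u v hu hv h
    have hc : Commute u v⁻¹ :=
      (show Commute u v from (Subgroup.mem_center_iff.mp hu v).symm).inv_right
    have h1 : (u * v⁻¹) ^ 9 = 1 := by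
      rw [hc.mul_pow, inv_pow, h, mul_inv_cancel]
    have hdvd9 : orderOf (u * v⁻¹) ∣ 9 := orderOf_dvd_of_pow_eq_one h1
    have hdvdc : orderOf (u * v⁻¹) ∣ Fintype.card G := orderOf_dvd_card
    have : orderOf (u * v⁻¹) ∣ 1 := by
      have hg : Nat.gcd 9 (Fintype.card G) = 1 := hcop
      exact (Nat.dvd_gcd hdvd9 hdvdc).trans (dvd_of_eq hg)
    have := orderOf_eq_one_iff.mp (Nat.dvd_one.mp this)
    rwa [mul_inv_eq_one] at this
  have part2 : ∃ x y z : G, ⁅⁅x, y⁆, z⁆ ^ 9 ≠ ⁅x, ⁅y, z⁆⁆ ^ 9 := by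
    by_contra hcon
    push_neg at hcon
    have hEq : ∀ x y z : G, ⁅⁅x, y⁆, z⁆ = ⁅x, ⁅y, z⁆⁆ := by
      intro x y z
      have hv : ⁅x, ⁅y, z⁆⁆ ∈ Subgroup.center G := by
        rw [← commutatorElement_inv]
        exact (Subgroup.center G).inv_mem (h3 y z x)
      exact pow9inj _ _ (h3 x y z) hv (hcon x y z)
    obtain ⟨x, y, z, hne⟩ := hcl3
    exact hne (levi h3 hEq x y z)
  refine ⟨?_, part2⟩
  obtain ⟨x, y, z, hne⟩ := part2
  exact ⟨x, y, z, by rw [identityL h3, identityR h3]; exact hne⟩
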